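/- Let V be a nonnegative adapted process satisfying E[V(k+1) | F_k] ≤ (1 - κ̂)V(k) + ψ̂ for constants 0 < κ̂ < 1 and ψ̂ ≥ 0. If α ≥ ψ̂/κ̂, then P(sup_{0 ≤ k ≤ T} V(k) ≥ α | V(0) = v) ≤ 1 - (1 - v/α)(1 - ψ̂/α)^T. -/

import Mathlib

open MeasureTheory

/-- Finite-horizon probability bound for a nonnegative process with drift
`E[V(k+1) | F_k] ≤ (1 - κ̂) V(k) + ψ̂`, in the case `α ≥ ψ̂/κ̂`:
`P(sup_{0 ≤ k ≤ T} V(k) ≥ α | V 0 = v) ≤ 1 - (1 - v/α)(1 - ψ̂/α)^T`. -/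
theorem stmt_1 {Ω : Type*} {mΩ : MeasurableSpace Ω} {μ : Measure Ω}
    [IsProbabilityMeasure μ] (ℱ : Filtration ℕ mΩ) (V : ℕ → Ω → ℝ)
    (hadp : Adapted ℱ V) (hint : ∀ k, Integrable (V k) μ)
    (hnn : ∀ k ω, 0 ≤ V k ω)
    (κhat ψhat : ℝ) (hκ0 : 0 < κhat) (hκ1 : κhat < 1) (hψ : 0 ≤ ψhat)
    (hdrift : ∀ k, μ[V (k + 1)|ℱ k] ≤ᵐ[μ] fun ω => (1 - κhat) * V k ω + ψhat)
    (T : ℕ) (α v : ℝ) (hα : 0 < α) (hv0 : 0 ≤ v) (hvα : v ≤ α)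
    (hV0 : ∀ ω, V 0 ω = v) (hcase : ψhat / κhat ≤ α) :
    (μ {ω | ∃ k ≤ T, α ≤ V k ω}).toReal
      ≤ 1 - (1 - v / α) * (1 - ψhat / α) ^ T := by
  have hψα : ψhat / α ≤ κhat := by
    rw [div_le_iff₀ hκ0] at hcase
    rw [div_le_iff₀ hα]
    linarith
  set q : ℝ := 1 - ψhat / α with hq
  have hq0 : 0 ≤ q := by
    have : ψhat / α ≤ 1 := hψα.trans hκ1.le
    simp only [hq]; linarith
  set A : ℕ → Set Ω := fun n => {ω | ∀ k ≤ n, V k ω < α} with hA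
  have hA_meas : ∀ n, MeasurableSet[ℱ n] (A n) := by
    intro n
    have heq : A n = ⋂ k ∈ Finset.range (n + 1), {ω | V k ω < α} := by
      ext ω
      simp [hA, Nat.lt_succ_iff]
    rw [heq]
    refine MeasurableSet.biInter (Set.to_countable _) fun k hk => ?_
    have hk' : k ≤ n := Nat.lt_succ_iff.mp (Finset.mem_range.mp hk)
    have hm : Measurable[ℱ n] (V k) :=
      (hadp k).mono (ℱ.mono hk') le_rfl
    exact measurableSet_lt hm measurable_const
  have hA_meas' : ∀ n, MeasurableSet (A n) := fun n => ℱ.le n _ (hA_meas n)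
  have hA_mono : ∀ n, A (n + 1) ⊆ A n := by
    intro n ω hω k hk
    exact hω k (hk.trans (Nat.le_succ n))
  have key : ∀ n, (α - v) * q ^ n ≤ ∫ ω in A n, (α - V n ω) ∂μ := by
    intro n
    induction n with
    | zero =>
      by_cases hv : v < α
      · have h0 : A 0 = Set.univ := by
          ext ω
          simp only [hA, Set.mem_setOf_eq, Set.mem_univ, iff_true, Nat.le_zero]
          rintro k rfl
          rw [hV0]; exact hv
        rw [h0, Measure.restrict_univ]
        have : (fun ω => α - V 0 ω) = fun _ => α - v := by
          funext ω; rw [hV0]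
        rw [this, integral_const, probReal_univ]
        simp
      · have hva : v = α := le_antisymm hvα (not_lt.mp hv)
        have h0 : A 0 = ∅ := by
          ext ω
          simp only [hA, Set.mem_setOf_eq, Set.mem_empty_iff_false, iff_false, not_forall]
          exact ⟨0, le_refl 0, by rw [hV0, hva]; exact lt_irrefl α⟩
        rw [h0]
        simp [hva]
    | succ n ih =>
      have hintc : Integrable (fun ω => (1 - κhat) * V n ω + ψhat) μ :=
        ((hint n).const_mul _).add (integrable_const _)
      have h1 : ∫ ω in A n, V (n + 1) ω ∂μ ≤ ∫ ω in A n, ((1 - κhat) * V n ω + ψhat) ∂μ := by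
        rw [← setIntegral_condExp (ℱ.le n) (hint (n + 1)) (hA_meas n)]
        exact setIntegral_mono_ae integrable_condExp.integrableOn hintc.integrableOn (hdrift n)
      have h2 : ∀ ω, q * (α - V n ω) ≤ α - ((1 - κhat) * V n ω + ψhat) := by
        intro ω
        rw [hq]
        have hx := hnn n ω
        have hmm : ψhat / α * V n ω ≤ κhat * V n ω :=
          mul_le_mul_of_nonneg_right hψα hx
        have hqa : (1 - ψhat / α) * (α - V n ω)
            = α - V n ω - ψhat + ψhat / α * V n ω := by
          field_simp; ring
        have hexp : (1 - κhat) * V n ω = V n ω - κhat * V n ω := by ring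
        linarith
      calc (α - v) * q ^ (n + 1) = q * ((α - v) * q ^ n) := by ring
        _ ≤ q * ∫ ω in A n, (α - V n ω) ∂μ := mul_le_mul_of_nonneg_left ih hq0
        _ = ∫ ω in A n, q * (α - V n ω) ∂μ := (integral_const_mul q _).symm
        _ ≤ ∫ ω in A n, (α - ((1 - κhat) * V n ω + ψhat)) ∂μ := by
            refine setIntegral_mono (((integrable_const α).sub (hint n)).const_mul q).integrableOn
              ((integrable_const α).sub hintc).integrableOn h2
        _ ≤ ∫ ω in A n, (α - V (n + 1) ω) ∂μ := by
            rw [integral_sub (integrable_const α).integrableOn hintc.integrableOn,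
              integral_sub (integrable_const α).integrableOn (hint (n + 1)).integrableOn]
            exact sub_le_sub_left h1 _
        _ ≤ ∫ ω in A (n + 1), (α - V (n + 1) ω) ∂μ := by
            have hdiff : MeasurableSet (A n \ A (n + 1)) :=
              (hA_meas' n).diff (hA_meas' (n + 1))
            have hsplit : A n = A (n + 1) ∪ A n \ A (n + 1) :=
              (Set.union_diff_cancel (hA_mono n)).symm
            have hi : IntegrableOn (fun ω => α - V (n + 1) ω) (A n) μ :=
              ((integrable_const α).sub (hint (n + 1))).integrableOn
            have heq := setIntegral_union (μ := μ) (f := fun ω => α - V (n + 1) ω)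
              Set.disjoint_sdiff_right hdiff
              (hi.mono_set (hA_mono n)) (hi.mono_set Set.diff_subset)
            rw [← hsplit] at heq
            have hneg : ∫ ω in A n \ A (n + 1), (α - V (n + 1) ω) ∂μ ≤ 0 := by
              refine setIntegral_nonpos hdiff fun ω hω => ?_
              obtain ⟨hin, hout⟩ := hω
              simp only [hA, Set.mem_setOf_eq, not_forall] at hout
              obtain ⟨k, hk, hVk⟩ := hout
              have hk1 : k = n + 1 := by
                by_contra hne
                exact hVk (hin k (Nat.lt_succ_iff.mp (lt_of_le_of_ne hk hne)))
              have : α ≤ V (n + 1) ω := by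
                rw [← hk1]; exact not_lt.mp hVk
              linarith
            linarith
  -- conclude
  have hub : ∫ ω in A T, (α - V T ω) ∂μ ≤ α * (μ (A T)).toReal := by
    calc ∫ ω in A T, (α - V T ω) ∂μ ≤ ∫ _ω in A T, α ∂μ :=
          setIntegral_mono ((integrable_const α).sub (hint T)).integrableOn
            (integrable_const α).integrableOn (fun ω => by linarith [hnn T ω])
      _ = α * (μ (A T)).toReal := by rw [setIntegral_const, smul_eq_mul, mul_comm]; rfl
  have hmain : (α - v) * q ^ T ≤ α * (μ (A T)).toReal := (key T).trans hub
  have hset : {ω | ∃ k ≤ T, α ≤ V k ω} = (A T)ᶜ := by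
    ext ω
    simp only [hA, Set.mem_setOf_eq, Set.mem_compl_iff, not_forall, not_lt, exists_prop]
  have hcompl : (μ ((A T)ᶜ)).toReal = 1 - (μ (A T)).toReal := by
    rw [measure_compl (hA_meas' T) (measure_ne_top μ _), measure_univ,
      ENNReal.toReal_sub_of_le prob_le_one ENNReal.one_ne_top, ENNReal.toReal_one]
  rw [hset, hcompl]
  have hfrac : (1 - v / α) * q ^ T ≤ (μ (A T)).toReal := by
    rw [← div_le_iff₀' hα] at hmain
    calc (1 - v / α) * q ^ T = (α - v) * q ^ T / α := by field_simp
      _ ≤ (μ (A T)).toReal := hmain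
  linarith
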